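/- Let c be a coefficient, μ > 0 and λ ∈ ℝ with c(y)·(λ − c(y)μ²) > 1 for a.e. y ∈ [0,H]. Let u be a nontrivial Dirichlet solution of the reduced problem with flux v. Then the set Z' := {y ∈ [0,H] : v(y) = 0} is nonempty and compact, and inf_{y∈[0,H]} [u(y)² + v(y)²] = min_{y∈Z'} u(y)². -/

import Mathlib

open MeasureTheory Set Filter Topology

noncomputable section

/-- `u` (with flux `v = c·u'` and weak derivative `g = u'`) is a solution of the reduced
problem `(c u')' + (λ - c μ²) u = 0` on the interval `[a, b]`:
`u` is absolutely continuous with derivative `g ∈ L²`, the flux `v` agrees a.e. with `c·g`,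
and `v` is absolutely continuous with derivative `(c μ² - λ)·u`. -/
def IsReducedSolutionOn (a b : ℝ) (c : ℝ → ℝ) (μ lam : ℝ) (u v g : ℝ → ℝ) : Prop :=
  IntervalIntegrable g volume a b ∧
  IntervalIntegrable (fun t => g t ^ 2) volume a b ∧
  (∀ y ∈ Set.Icc a b, u y = u a + ∫ t in a..y, g t) ∧
  (∀ᵐ y ∂volume.restrict (Set.Ioo a b), v y = c y * g y) ∧
  IntervalIntegrable (fun t => (c t * μ ^ 2 - lam) * u t) volume a b ∧
  (∀ y ∈ Set.Icc a b, v y = v a + ∫ t in a..y, (c t * μ ^ 2 - lam) * u t)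

/-- A coefficient on `[0, H]`: measurable and bounded between `cm` and `cM`. -/
def IsCoeff (H cm cM : ℝ) (c : ℝ → ℝ) : Prop :=
  Measurable c ∧ ∀ y ∈ Set.Icc (0 : ℝ) H, cm ≤ c y ∧ c y ≤ cM

/-- Symmetrized Fubini: the square of an integral as twice a triangular integral. -/
lemma sq_setIntegral {f : ℝ → ℝ} {a b : ℝ} (hf : IntegrableOn f (Set.Ioc a b)) :
    (∫ s in Set.Ioc a b, f s) ^ 2
      = 2 * ∫ t in Set.Ioc a b, f t * (∫ s in Set.Ioc a t, f s) := by
  set μ := volume.restrict (Set.Ioc a b) with hμdef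
  have hfμ : Integrable f μ := hf
  set F : ℝ × ℝ → ℝ := fun p => f p.1 * f p.2 with hFdef
  have hF : Integrable F (μ.prod μ) := hfμ.mul_prod hfμ
  have hSm : MeasurableSet {p : ℝ × ℝ | p.2 ≤ p.1} :=
    measurableSet_le measurable_snd measurable_fst
  have hS'm : MeasurableSet {p : ℝ × ℝ | p.1 ≤ p.2} :=
    measurableSet_le measurable_fst measurable_snd
  have hTm : MeasurableSet {p : ℝ × ℝ | p.1 < p.2} :=
    measurableSet_lt measurable_fst measurable_snd
  -- diagonal is null
  have hdiag : (μ.prod μ) {p : ℝ × ℝ | p.1 = p.2} = 0 := by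
    have hm : MeasurableSet {p : ℝ × ℝ | p.1 = p.2} :=
      measurableSet_eq_fun measurable_fst measurable_snd
    rw [Measure.prod_apply hm]
    have : ∀ x : ℝ, μ (Prod.mk x ⁻¹' {p : ℝ × ℝ | p.1 = p.2}) = 0 := by
      intro x
      have : Prod.mk x ⁻¹' {p : ℝ × ℝ | p.1 = p.2} = {x} := by
        ext y; simp [eq_comm]
      rw [this]
      exact le_antisymm (le_trans (Measure.restrict_le_self _) (by simp)) zero_le
    simp [this]
  -- the two half-plane integrals agree
  have hswap : ∫ p in {p : ℝ × ℝ | p.1 ≤ p.2}, F p ∂(μ.prod μ)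
      = ∫ p in {p : ℝ × ℝ | p.2 ≤ p.1}, F p ∂(μ.prod μ) := by
    rw [← integral_indicator hS'm, ← integral_indicator hSm]
    rw [← MeasureTheory.integral_prod_swap]
    congr 1
    ext p
    by_cases h : p.2 ≤ p.1 <;>
      simp [Set.indicator_apply, h, hFdef, Prod.swap, mul_comm]
  -- splitting into the two half planes
  have hsplit : ∫ p, F p ∂(μ.prod μ)
      = (∫ p in {p : ℝ × ℝ | p.2 ≤ p.1}, F p ∂(μ.prod μ))
        + ∫ p in {p : ℝ × ℝ | p.1 < p.2}, F p ∂(μ.prod μ) := by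
    have hu : {p : ℝ × ℝ | p.2 ≤ p.1} ∪ {p : ℝ × ℝ | p.1 < p.2} = Set.univ := by
      ext p; simp [le_or_gt]
    have hd : Disjoint {p : ℝ × ℝ | p.2 ≤ p.1} {p : ℝ × ℝ | p.1 < p.2} := by
      rw [Set.disjoint_left]; intro p h1 h2
      simp only [Set.mem_setOf_eq] at h1 h2
      exact absurd h2 (not_lt.2 h1)
    rw [← MeasureTheory.setIntegral_union hd hTm hF.integrableOn hF.integrableOn, hu,
      setIntegral_univ]
  -- strict and non-strict half planes agree
  have hTS : ∫ p in {p : ℝ × ℝ | p.1 < p.2}, F p ∂(μ.prod μ)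
      = ∫ p in {p : ℝ × ℝ | p.1 ≤ p.2}, F p ∂(μ.prod μ) := by
    apply setIntegral_congr_set
    apply MeasureTheory.ae_eq_set.2
    constructor
    · have he : {p : ℝ × ℝ | p.1 < p.2} \ {p : ℝ × ℝ | p.1 ≤ p.2} = ∅ := by
        ext p
        simp only [Set.mem_diff, Set.mem_setOf_eq, Set.mem_empty_iff_false, iff_false, not_and,
          not_not]
        exact fun h => le_of_lt h
      rw [he]; simp
    · refine measure_mono_null ?_ hdiag
      intro p hp
      exact le_antisymm hp.1 (not_lt.1 hp.2)
  have hprodmul : ∫ p, F p ∂(μ.prod μ) = (∫ s, f s ∂μ) * (∫ s, f s ∂μ) :=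
    MeasureTheory.integral_prod_mul f f
  -- compute the lower-triangle integral as iterated integral
  have htri : ∫ p in {p : ℝ × ℝ | p.2 ≤ p.1}, F p ∂(μ.prod μ)
      = ∫ t in Set.Ioc a b, f t * (∫ s in Set.Ioc a t, f s) := by
    rw [← integral_indicator hSm]
    rw [MeasureTheory.integral_prod _ (hF.indicator hSm)]
    have hinner : ∀ x : ℝ, (∫ y, ({p : ℝ × ℝ | p.2 ≤ p.1}).indicator F (x, y) ∂μ)
        = f x * ∫ y in Set.Iic x, f y ∂μ := by
      intro x
      have : ∀ y, ({p : ℝ × ℝ | p.2 ≤ p.1}).indicator F (x, y)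
          = (Set.Iic x).indicator (fun y => f x * f y) y := by
        intro y
        by_cases h : y ≤ x <;> simp [Set.indicator_apply, h, hFdef]
      simp_rw [this]
      rw [integral_indicator measurableSet_Iic, integral_const_mul]
    simp_rw [hinner]
    rw [hμdef]
    apply setIntegral_congr_ae measurableSet_Ioc
    filter_upwards with x hx
    congr 1
    rw [Measure.restrict_restrict measurableSet_Iic]
    have hset : Set.Iic x ∩ Set.Ioc a b = Set.Ioc a x := by
      ext s
      simp only [Set.mem_inter_iff, Set.mem_Iic, Set.mem_Ioc]
      exact ⟨fun h => ⟨h.2.1, h.1⟩, fun h => ⟨h.2, h.1, le_trans h.2 hx.2⟩⟩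
    rw [hset]
  have : (∫ s, f s ∂μ) * (∫ s, f s ∂μ)
      = 2 * ∫ t in Set.Ioc a b, f t * (∫ s in Set.Ioc a t, f s) := by
    rw [← hprodmul, hsplit, hTS, hswap, htri]; ring
  rw [sq]
  exact this

/-- Fundamental theorem of calculus for the square of a primitive. -/
lemma sq_primitive {f : ℝ → ℝ} {a b : ℝ} (hab : a ≤ b) (hf : IntervalIntegrable f volume a b)
    (C : ℝ) :
    (C + ∫ t in a..b, f t) ^ 2
      = C ^ 2 + ∫ t in a..b, 2 * (C + ∫ s in a..t, f s) * f t := by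
  have hIcc : IntegrableOn f (Set.uIcc a b) := by
    rw [Set.uIcc_of_le hab]
    exact (intervalIntegrable_iff_integrableOn_Icc_of_le hab).1 hf
  have hgcont : ContinuousOn (fun t => ∫ s in a..t, f s) (Set.uIcc a b) :=
    intervalIntegral.continuousOn_primitive_interval hIcc
  have h1 : IntervalIntegrable (fun t => (∫ s in a..t, f s) * f t) volume a b :=
    hf.continuousOn_mul hgcont
  have h2 : IntervalIntegrable (fun t => 2 * C * f t) volume a b := hf.const_mul _
  have hsplit : ∫ t in a..b, 2 * (C + ∫ s in a..t, f s) * f t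
      = (∫ t in a..b, 2 * C * f t) + 2 * ∫ t in a..b, (∫ s in a..t, f s) * f t := by
    rw [← intervalIntegral.integral_const_mul, ← intervalIntegral.integral_add h2 (h1.const_mul 2)]
    apply intervalIntegral.integral_congr
    intro t ht
    simp only
    ring
  have hkey : ∫ t in a..b, (∫ s in a..t, f s) * f t = (∫ t in a..b, f t) ^ 2 / 2 := by
    have h3 := sq_setIntegral ((intervalIntegrable_iff_integrableOn_Ioc_of_le hab).1 hf)
    have e1 : ∫ t in a..b, (∫ s in a..t, f s) * f t
        = ∫ t in Set.Ioc a b, f t * (∫ s in Set.Ioc a t, f s) := by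
      rw [intervalIntegral.integral_of_le hab]
      apply setIntegral_congr_ae measurableSet_Ioc
      filter_upwards with t ht
      rw [intervalIntegral.integral_of_le ht.1.le, mul_comm]
    have e2 : ∫ t in a..b, f t = ∫ t in Set.Ioc a b, f t := intervalIntegral.integral_of_le hab
    rw [e1, e2, h3]; ring
  rw [hsplit, hkey, intervalIntegral.integral_const_mul]
  ring

/-- The amplitude `u² + v²` decreases on intervals where `u·u' ≥ 0` a.e. -/
lemma W_diff {cm cM H : ℝ} (hcm : 0 < cm) {c : ℝ → ℝ} (hc : IsCoeff H cm cM c)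
    {μ lam : ℝ}
    (hbig : ∀ᵐ y ∂volume.restrict (Set.Icc (0:ℝ) H), 1 < c y * (lam - c y * μ ^ 2))
    {u v g : ℝ → ℝ} (hsol : IsReducedSolutionOn 0 H c μ lam u v g)
    {p q : ℝ} (hp : 0 ≤ p) (hpq : p ≤ q) (hq : q ≤ H)
    (hug : ∀ᵐ t ∂volume.restrict (Set.Ioo p q), 0 ≤ u t * g t) :
    u q ^ 2 + v q ^ 2 ≤ u p ^ 2 + v p ^ 2 := by
  obtain ⟨hg, hg2, hu, hvg, hw, hv⟩ := hsol
  set w : ℝ → ℝ := fun t => (c t * μ ^ 2 - lam) * u t with hwdef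
  have hsub : Set.uIcc p q ⊆ Set.uIcc 0 H := by
    rw [Set.uIcc_of_le hpq, Set.uIcc_of_le (hp.trans (hpq.trans hq))]
    exact Set.Icc_subset_Icc hp hq
  have hg' : IntervalIntegrable g volume p q := hg.mono_set hsub
  have hw' : IntervalIntegrable w volume p q := hw.mono_set hsub
  have hg0p : IntervalIntegrable g volume 0 p := hg.mono_set (by
    rw [Set.uIcc_of_le hp, Set.uIcc_of_le (hp.trans (hpq.trans hq))]
    exact Set.Icc_subset_Icc le_rfl (hpq.trans hq))
  have hw0p : IntervalIntegrable w volume 0 p := hw.mono_set (by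
    rw [Set.uIcc_of_le hp, Set.uIcc_of_le (hp.trans (hpq.trans hq))]
    exact Set.Icc_subset_Icc le_rfl (hpq.trans hq))
  have hicc : ∀ y ∈ Set.Icc p q, y ∈ Set.Icc (0:ℝ) H := fun y hy =>
    ⟨hp.trans hy.1, hy.2.trans hq⟩
  have hu' : ∀ y ∈ Set.Icc p q, u y = u p + ∫ t in p..y, g t := by
    intro y hy
    have h1 := hu y (hicc y hy)
    have h2 := hu p ⟨hp, hpq.trans hq⟩
    have hgpy : IntervalIntegrable g volume p y := hg'.mono_set (by
      rw [Set.uIcc_of_le hy.1, Set.uIcc_of_le hpq]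
      exact Set.Icc_subset_Icc le_rfl hy.2)
    rw [h1, h2, ← intervalIntegral.integral_add_adjacent_intervals hg0p hgpy]
    ring
  have hv' : ∀ y ∈ Set.Icc p q, v y = v p + ∫ t in p..y, w t := by
    intro y hy
    have h1 := hv y (hicc y hy)
    have h2 := hv p ⟨hp, hpq.trans hq⟩
    have hwpy : IntervalIntegrable w volume p y := hw'.mono_set (by
      rw [Set.uIcc_of_le hy.1, Set.uIcc_of_le hpq]
      exact Set.Icc_subset_Icc le_rfl hy.2)
    rw [h1, h2, ← intervalIntegral.integral_add_adjacent_intervals hw0p hwpy]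
    ring
  have hsqu : u q ^ 2 = u p ^ 2 + ∫ t in p..q, 2 * u t * g t := by
    have := sq_primitive hpq hg' (u p)
    rw [← hu' q ⟨hpq, le_rfl⟩] at this
    rw [this]
    congr 1
    apply intervalIntegral.integral_congr
    intro t ht
    rw [Set.uIcc_of_le hpq] at ht
    show 2 * (u p + ∫ s in p..t, g s) * g t = 2 * u t * g t
    rw [← hu' t ht]
  have hsqv : v q ^ 2 = v p ^ 2 + ∫ t in p..q, 2 * v t * w t := by
    have := sq_primitive hpq hw' (v p)
    rw [← hv' q ⟨hpq, le_rfl⟩] at this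
    rw [this]
    congr 1
    apply intervalIntegral.integral_congr
    intro t ht
    rw [Set.uIcc_of_le hpq] at ht
    show 2 * (v p + ∫ s in p..t, w s) * w t = 2 * v t * w t
    rw [← hv' t ht]
  -- continuity of u and v on [p,q]
  have hucont : ContinuousOn u (Set.uIcc p q) := by
    apply ContinuousOn.congr (f := fun y => u p + ∫ t in p..y, g t)
    · exact continuousOn_const.add (intervalIntegral.continuousOn_primitive_interval
        (by rw [Set.uIcc_of_le hpq]
            exact (intervalIntegrable_iff_integrableOn_Icc_of_le hpq).1 hg'))
    · intro y hy
      rw [Set.uIcc_of_le hpq] at hy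
      exact hu' y hy
  have hvcont : ContinuousOn v (Set.uIcc p q) := by
    apply ContinuousOn.congr (f := fun y => v p + ∫ t in p..y, w t)
    · exact continuousOn_const.add (intervalIntegral.continuousOn_primitive_interval
        (by rw [Set.uIcc_of_le hpq]
            exact (intervalIntegrable_iff_integrableOn_Icc_of_le hpq).1 hw'))
    · intro y hy
      rw [Set.uIcc_of_le hpq] at hy
      exact hv' y hy
  have hugint : IntervalIntegrable (fun t => 2 * u t * g t) volume p q :=
    hg'.continuousOn_mul ((continuousOn_const.mul hucont) :
      ContinuousOn (fun t => (2:ℝ) * u t) (Set.uIcc p q))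
  have hvwint : IntervalIntegrable (fun t => 2 * v t * w t) volume p q :=
    hw'.continuousOn_mul ((continuousOn_const.mul hvcont) :
      ContinuousOn (fun t => (2:ℝ) * v t) (Set.uIcc p q))
  have hsum : (u q ^ 2 + v q ^ 2) - (u p ^ 2 + v p ^ 2)
      = ∫ t in p..q, (2 * u t * g t + 2 * v t * w t) := by
    rw [intervalIntegral.integral_add hugint hvwint, hsqu, hsqv]; ring
  -- the integrand is a.e. nonpositive on (p, q)
  have hae : ∀ᵐ t ∂volume.restrict (Set.Ioo p q),
      2 * u t * g t + 2 * v t * w t ≤ 0 := by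
    have hmem : ∀ᵐ t ∂volume.restrict (Set.Ioo p q), t ∈ Set.Ioo p q :=
      ae_restrict_mem measurableSet_Ioo
    have hvg' : ∀ᵐ t ∂volume.restrict (Set.Ioo p q), v t = c t * g t :=
      ae_restrict_of_ae_restrict_of_subset
        (Set.Ioo_subset_Ioo hp hq) hvg
    have hbig' : ∀ᵐ t ∂volume.restrict (Set.Ioo p q), 1 < c t * (lam - c t * μ ^ 2) :=
      ae_restrict_of_ae_restrict_of_subset
        (Set.Ioo_subset_Icc_self.trans (Set.Icc_subset_Icc hp hq)) hbig
    filter_upwards [hmem, hvg', hbig', hug] with t ht h1 h2 h3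
    rw [h1, hwdef]
    have : 2 * u t * g t + 2 * (c t * g t) * ((c t * μ ^ 2 - lam) * u t)
        = 2 * (u t * g t) * (1 - c t * (lam - c t * μ ^ 2)) := by ring
    rw [this]
    apply mul_nonpos_of_nonneg_of_nonpos
    · linarith
    · linarith
  have hint : (∫ t in p..q, (2 * u t * g t + 2 * v t * w t)) ≤ 0 := by
    rw [intervalIntegral.integral_of_le hpq, MeasureTheory.integral_Ioc_eq_integral_Ioo]
    exact integral_nonpos_of_ae hae
  linarith [hsum ▸ hint]

/-- The amplitude `u² + v²` increases on intervals where `u·u' ≤ 0` a.e. -/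
lemma W_diff' {cm cM H : ℝ} (hcm : 0 < cm) {c : ℝ → ℝ} (hc : IsCoeff H cm cM c)
    {μ lam : ℝ}
    (hbig : ∀ᵐ y ∂volume.restrict (Set.Icc (0:ℝ) H), 1 < c y * (lam - c y * μ ^ 2))
    {u v g : ℝ → ℝ} (hsol : IsReducedSolutionOn 0 H c μ lam u v g)
    {p q : ℝ} (hp : 0 ≤ p) (hpq : p ≤ q) (hq : q ≤ H)
    (hug : ∀ᵐ t ∂volume.restrict (Set.Ioo p q), u t * g t ≤ 0) :
    u p ^ 2 + v p ^ 2 ≤ u q ^ 2 + v q ^ 2 := by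
  obtain ⟨hg, hg2, hu, hvg, hw, hv⟩ := hsol
  set w : ℝ → ℝ := fun t => (c t * μ ^ 2 - lam) * u t with hwdef
  have hsub : Set.uIcc p q ⊆ Set.uIcc 0 H := by
    rw [Set.uIcc_of_le hpq, Set.uIcc_of_le (hp.trans (hpq.trans hq))]
    exact Set.Icc_subset_Icc hp hq
  have hg' : IntervalIntegrable g volume p q := hg.mono_set hsub
  have hw' : IntervalIntegrable w volume p q := hw.mono_set hsub
  have hg0p : IntervalIntegrable g volume 0 p := hg.mono_set (by
    rw [Set.uIcc_of_le hp, Set.uIcc_of_le (hp.trans (hpq.trans hq))]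
    exact Set.Icc_subset_Icc le_rfl (hpq.trans hq))
  have hw0p : IntervalIntegrable w volume 0 p := hw.mono_set (by
    rw [Set.uIcc_of_le hp, Set.uIcc_of_le (hp.trans (hpq.trans hq))]
    exact Set.Icc_subset_Icc le_rfl (hpq.trans hq))
  have hicc : ∀ y ∈ Set.Icc p q, y ∈ Set.Icc (0:ℝ) H := fun y hy =>
    ⟨hp.trans hy.1, hy.2.trans hq⟩
  have hu' : ∀ y ∈ Set.Icc p q, u y = u p + ∫ t in p..y, g t := by
    intro y hy
    have h1 := hu y (hicc y hy)
    have h2 := hu p ⟨hp, hpq.trans hq⟩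
    have hgpy : IntervalIntegrable g volume p y := hg'.mono_set (by
      rw [Set.uIcc_of_le hy.1, Set.uIcc_of_le hpq]
      exact Set.Icc_subset_Icc le_rfl hy.2)
    rw [h1, h2, ← intervalIntegral.integral_add_adjacent_intervals hg0p hgpy]
    ring
  have hv' : ∀ y ∈ Set.Icc p q, v y = v p + ∫ t in p..y, w t := by
    intro y hy
    have h1 := hv y (hicc y hy)
    have h2 := hv p ⟨hp, hpq.trans hq⟩
    have hwpy : IntervalIntegrable w volume p y := hw'.mono_set (by
      rw [Set.uIcc_of_le hy.1, Set.uIcc_of_le hpq]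
      exact Set.Icc_subset_Icc le_rfl hy.2)
    rw [h1, h2, ← intervalIntegral.integral_add_adjacent_intervals hw0p hwpy]
    ring
  have hsqu : u q ^ 2 = u p ^ 2 + ∫ t in p..q, 2 * u t * g t := by
    have := sq_primitive hpq hg' (u p)
    rw [← hu' q ⟨hpq, le_rfl⟩] at this
    rw [this]
    congr 1
    apply intervalIntegral.integral_congr
    intro t ht
    rw [Set.uIcc_of_le hpq] at ht
    show 2 * (u p + ∫ s in p..t, g s) * g t = 2 * u t * g t
    rw [← hu' t ht]
  have hsqv : v q ^ 2 = v p ^ 2 + ∫ t in p..q, 2 * v t * w t := by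
    have := sq_primitive hpq hw' (v p)
    rw [← hv' q ⟨hpq, le_rfl⟩] at this
    rw [this]
    congr 1
    apply intervalIntegral.integral_congr
    intro t ht
    rw [Set.uIcc_of_le hpq] at ht
    show 2 * (v p + ∫ s in p..t, w s) * w t = 2 * v t * w t
    rw [← hv' t ht]
  have hucont : ContinuousOn u (Set.uIcc p q) := by
    apply ContinuousOn.congr (f := fun y => u p + ∫ t in p..y, g t)
    · exact continuousOn_const.add (intervalIntegral.continuousOn_primitive_interval
        (by rw [Set.uIcc_of_le hpq]
            exact (intervalIntegrable_iff_integrableOn_Icc_of_le hpq).1 hg'))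
    · intro y hy
      rw [Set.uIcc_of_le hpq] at hy
      exact hu' y hy
  have hvcont : ContinuousOn v (Set.uIcc p q) := by
    apply ContinuousOn.congr (f := fun y => v p + ∫ t in p..y, w t)
    · exact continuousOn_const.add (intervalIntegral.continuousOn_primitive_interval
        (by rw [Set.uIcc_of_le hpq]
            exact (intervalIntegrable_iff_integrableOn_Icc_of_le hpq).1 hw'))
    · intro y hy
      rw [Set.uIcc_of_le hpq] at hy
      exact hv' y hy
  have hugint : IntervalIntegrable (fun t => 2 * u t * g t) volume p q :=
    hg'.continuousOn_mul ((continuousOn_const.mul hucont) :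
      ContinuousOn (fun t => (2:ℝ) * u t) (Set.uIcc p q))
  have hvwint : IntervalIntegrable (fun t => 2 * v t * w t) volume p q :=
    hw'.continuousOn_mul ((continuousOn_const.mul hvcont) :
      ContinuousOn (fun t => (2:ℝ) * v t) (Set.uIcc p q))
  have hsum : (u q ^ 2 + v q ^ 2) - (u p ^ 2 + v p ^ 2)
      = ∫ t in p..q, (2 * u t * g t + 2 * v t * w t) := by
    rw [intervalIntegral.integral_add hugint hvwint, hsqu, hsqv]; ring
  -- the integrand is a.e. nonnegative on (p, q)
  have hae : ∀ᵐ t ∂volume.restrict (Set.Ioo p q),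
      0 ≤ 2 * u t * g t + 2 * v t * w t := by
    have hmem : ∀ᵐ t ∂volume.restrict (Set.Ioo p q), t ∈ Set.Ioo p q :=
      ae_restrict_mem measurableSet_Ioo
    have hvg' : ∀ᵐ t ∂volume.restrict (Set.Ioo p q), v t = c t * g t :=
      ae_restrict_of_ae_restrict_of_subset
        (Set.Ioo_subset_Ioo hp hq) hvg
    have hbig' : ∀ᵐ t ∂volume.restrict (Set.Ioo p q), 1 < c t * (lam - c t * μ ^ 2) :=
      ae_restrict_of_ae_restrict_of_subset
        (Set.Ioo_subset_Icc_self.trans (Set.Icc_subset_Icc hp hq)) hbig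
    filter_upwards [hmem, hvg', hbig', hug] with t ht h1 h2 h3
    rw [h1, hwdef]
    have : 2 * u t * g t + 2 * (c t * g t) * ((c t * μ ^ 2 - lam) * u t)
        = 2 * (u t * g t) * (1 - c t * (lam - c t * μ ^ 2)) := by ring
    rw [this]
    nlinarith [h2, h3]
  have hint : 0 ≤ (∫ t in p..q, (2 * u t * g t + 2 * v t * w t)) := by
    rw [intervalIntegral.integral_of_le hpq, MeasureTheory.integral_Ioc_eq_integral_Ioo]
    exact integral_nonneg_of_ae hae
  linarith [hsum ▸ hint]

/-- Continuity of a function given by an integral representation on `[0, H]`. -/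
lemma sol_cont {H : ℝ} (hH : 0 ≤ H) {f F : ℝ → ℝ}
    (hf : IntervalIntegrable f volume 0 H)
    (hF : ∀ y ∈ Set.Icc (0:ℝ) H, F y = F 0 + ∫ t in (0:ℝ)..y, f t) :
    ContinuousOn F (Set.Icc 0 H) := by
  apply ContinuousOn.congr (f := fun y => F 0 + ∫ t in (0:ℝ)..y, f t)
  · apply continuousOn_const.add
    have h2 : IntegrableOn f (Set.uIcc (0:ℝ) H) := by
      rw [Set.uIcc_of_le hH]
      exact (intervalIntegrable_iff_integrableOn_Icc_of_le hH).1 hf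
    have := intervalIntegral.continuousOn_primitive_interval h2
    rwa [Set.uIcc_of_le hH] at this
  · exact hF

/-- Negating a solution gives a solution. -/
lemma neg_sol {a b : ℝ} {c : ℝ → ℝ} {μ lam : ℝ} {u v g : ℝ → ℝ}
    (h : IsReducedSolutionOn a b c μ lam u v g) :
    IsReducedSolutionOn a b c μ lam (fun y => -u y) (fun y => -v y) (fun y => -g y) := by
  obtain ⟨hg, hg2, hu, hvg, hw, hv⟩ := h
  have hneg : (fun t => (c t * μ ^ 2 - lam) * -u t)
      = fun t => -((c t * μ ^ 2 - lam) * u t) := by funext t; ring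
  refine ⟨hg.neg, ?_, ?_, ?_, ?_, ?_⟩
  · show IntervalIntegrable (fun t => (-g t) ^ 2) volume a b
    simp only [neg_sq]
    exact hg2
  · intro y hy
    show -u y = -u a + ∫ t in a..y, -g t
    rw [intervalIntegral.integral_neg, hu y hy]
    ring
  · filter_upwards [hvg] with t h1
    show -v t = c t * (-g t)
    rw [h1]; ring
  · show IntervalIntegrable (fun t => (c t * μ ^ 2 - lam) * -u t) volume a b
    rw [hneg]
    exact hw.neg
  · intro y hy
    show -v y = -v a + ∫ t in a..y, (c t * μ ^ 2 - lam) * -u t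
    rw [hneg, intervalIntegral.integral_neg, hv y hy]
    ring

/-- Chasing the first zero of the flux to the right. -/
lemma goRight {cm cM H : ℝ} (hcm : 0 < cm) (hH : 0 < H) {c : ℝ → ℝ} (hc : IsCoeff H cm cM c)
    {μ lam : ℝ}
    (hbig : ∀ᵐ y ∂volume.restrict (Set.Icc (0:ℝ) H), 1 < c y * (lam - c y * μ ^ 2))
    {u v g : ℝ → ℝ} (hsol : IsReducedSolutionOn 0 H c μ lam u v g)
    (huH : u H = 0)
    {a : ℝ} (ha : a ∈ Set.Icc (0:ℝ) H) (haH : a < H) (hva : 0 < v a) (hua : 0 ≤ u a) :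
    ∃ z ∈ Set.Icc (0:ℝ) H, v z = 0 ∧ u z ^ 2 ≤ u a ^ 2 + v a ^ 2 := by
  obtain ⟨hg, hg2, hu, hvg, hw, hv⟩ := hsol
  have hvcont : ContinuousOn v (Set.Icc 0 H) := sol_cont hH.le hw hv
  have hcpos : ∀ y ∈ Set.Icc (0:ℝ) H, 0 < c y := fun y hy => lt_of_lt_of_le hcm (hc.2 y hy).1
  have h0H : (0:ℝ) ≤ H := hH.le
  -- Step A : there is a zero of v in [a, H]
  have hSne : ∃ t ∈ Set.Icc a H, v t = 0 := by
    by_contra hS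
    push_neg at hS
    have hvpos : ∀ t ∈ Set.Icc a H, 0 < v t := by
      intro t ht
      rcases lt_or_ge 0 (v t) with h | h
      · exact h
      · exfalso
        have hsub : Set.Icc a t ⊆ Set.Icc 0 H := Set.Icc_subset_Icc ha.1 ht.2
        obtain ⟨s, hs, hvs⟩ := intermediate_value_Icc' ht.1 (hvcont.mono hsub) ⟨h, hva.le⟩
        exact hS s ⟨hs.1, hs.2.trans ht.2⟩ hvs
    have hgpos : ∀ᵐ t ∂volume.restrict (Set.Ioo a H), 0 < g t := by
      have hvg' : ∀ᵐ t ∂volume.restrict (Set.Ioo a H), v t = c t * g t :=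
        ae_restrict_of_ae_restrict_of_subset (Set.Ioo_subset_Ioo ha.1 le_rfl) hvg
      filter_upwards [ae_restrict_mem measurableSet_Ioo, hvg'] with t ht h1
      have h2 := hvpos t ⟨ht.1.le, ht.2.le⟩
      have h3 := hcpos t ⟨ha.1.trans ht.1.le, ht.2.le⟩
      nlinarith
    have hgaH : IntervalIntegrable g volume a H := hg.mono_set (by
      rw [Set.uIcc_of_le haH.le, Set.uIcc_of_le h0H]
      exact Set.Icc_subset_Icc ha.1 le_rfl)
    have hg0a : IntervalIntegrable g volume 0 a := hg.mono_set (by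
      rw [Set.uIcc_of_le ha.1, Set.uIcc_of_le h0H]
      exact Set.Icc_subset_Icc le_rfl ha.2)
    have huHa : u H = u a + ∫ t in a..H, g t := by
      rw [hu H ⟨h0H, le_rfl⟩, hu a ha,
        ← intervalIntegral.integral_add_adjacent_intervals hg0a hgaH]
      ring
    have hIpos : 0 < ∫ t in a..H, g t := by
      rw [intervalIntegral.integral_of_le haH.le, MeasureTheory.integral_Ioc_eq_integral_Ioo]
      have hint : IntegrableOn g (Set.Ioo a H) :=
        ((intervalIntegrable_iff_integrableOn_Ioc_of_le haH.le).1 hgaH).mono_set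
          Set.Ioo_subset_Ioc_self
      have hnn : 0 ≤ᵐ[volume.restrict (Set.Ioo a H)] g := hgpos.mono fun t ht => ht.le
      rcases (integral_nonneg_of_ae hnn).lt_or_eq with h | h
      · exact h
      · exfalso
        have hz := (integral_eq_zero_iff_of_nonneg_ae hnn hint).1 h.symm
        have hFalse : ∀ᵐ t ∂volume.restrict (Set.Ioo a H), False := by
          filter_upwards [hgpos, hz] with t h1 h2
          exact h1.ne' h2
        have h4 : volume.restrict (Set.Ioo a H) = 0 :=
          MeasureTheory.ae_eq_bot.1 (Filter.eventually_false_iff_eq_bot.1 hFalse)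
        have h5 : volume (Set.Ioo a H) = 0 := by
          rw [← Measure.restrict_apply_univ, h4]; simp
        rw [Real.volume_Ioo, ENNReal.ofReal_eq_zero] at h5
        linarith
    linarith
  -- Step B : z = first zero of v in [a, H]
  obtain ⟨t0, ht0, hvt0⟩ := hSne
  set S := Set.Icc a H ∩ v ⁻¹' {0} with hSdef
  have hSne' : S.Nonempty := ⟨t0, ht0, hvt0⟩
  have hSbdd : BddBelow S := ⟨a, fun x hx => hx.1.1⟩
  have hSclosed : IsClosed S :=
    ContinuousOn.preimage_isClosed_of_isClosed
      (hvcont.mono (Set.Icc_subset_Icc ha.1 le_rfl)) isClosed_Icc isClosed_singleton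
  set z := sInf S with hzdef
  have hzS : z ∈ S := hSclosed.csInf_mem hSne' hSbdd
  have hza : a ≤ z := hzS.1.1
  have hzH : z ≤ H := hzS.1.2
  have hvz : v z = 0 := hzS.2
  have hz0H : z ∈ Set.Icc (0:ℝ) H := ⟨ha.1.trans hza, hzH⟩
  -- Step C : v positive on [a, z)
  have hvpos : ∀ t ∈ Set.Ico a z, 0 < v t := by
    intro t ht
    rcases lt_or_ge 0 (v t) with h | h
    · exact h
    · exfalso
      obtain ⟨s, hs, hvs⟩ := intermediate_value_Icc' ht.1
        (hvcont.mono (Set.Icc_subset_Icc ha.1 ((ht.2.le).trans hzH))) ⟨h, hva.le⟩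
      have hsS : s ∈ S := ⟨⟨hs.1, (hs.2.trans ht.2.le).trans hzH⟩, hvs⟩
      have hzs := csInf_le hSbdd hsS
      have h6 := hs.2
      have h7 := ht.2
      rw [← hzdef] at hzs
      linarith
  -- Step D : g a.e. nonnegative on (a, z)
  have hgnn : ∀ᵐ t ∂volume.restrict (Set.Ioo a z), 0 ≤ g t := by
    have hvg' : ∀ᵐ t ∂volume.restrict (Set.Ioo a z), v t = c t * g t :=
      ae_restrict_of_ae_restrict_of_subset (Set.Ioo_subset_Ioo ha.1 hzH) hvg
    filter_upwards [ae_restrict_mem measurableSet_Ioo, hvg'] with t ht h1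
    have h2 := hvpos t ⟨ht.1.le, ht.2⟩
    have h3 := hcpos t ⟨ha.1.trans ht.1.le, ht.2.le.trans hzH⟩
    nlinarith
  -- Step E : u nonnegative on [a, z]
  have hgaz : IntervalIntegrable g volume a z := hg.mono_set (by
    rw [Set.uIcc_of_le hza, Set.uIcc_of_le h0H]
    exact Set.Icc_subset_Icc ha.1 hzH)
  have hg0a : IntervalIntegrable g volume 0 a := hg.mono_set (by
    rw [Set.uIcc_of_le ha.1, Set.uIcc_of_le h0H]
    exact Set.Icc_subset_Icc le_rfl ha.2)
  have hunn : ∀ t ∈ Set.Icc a z, 0 ≤ u t := by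
    intro t ht
    have hgat : IntervalIntegrable g volume a t := hgaz.mono_set (by
      rw [Set.uIcc_of_le ht.1, Set.uIcc_of_le hza]
      exact Set.Icc_subset_Icc le_rfl ht.2)
    have hut : u t = u a + ∫ s in a..t, g s := by
      rw [hu t ⟨ha.1.trans ht.1, ht.2.trans hzH⟩, hu a ha,
        ← intervalIntegral.integral_add_adjacent_intervals hg0a hgat]
      ring
    have hInn : 0 ≤ ∫ s in a..t, g s := by
      rw [intervalIntegral.integral_of_le ht.1, MeasureTheory.integral_Ioc_eq_integral_Ioo]
      exact integral_nonneg_of_ae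
        (ae_restrict_of_ae_restrict_of_subset (Set.Ioo_subset_Ioo le_rfl ht.2) hgnn)
    rw [hut]
    linarith
  have hug : ∀ᵐ t ∂volume.restrict (Set.Ioo a z), 0 ≤ u t * g t := by
    filter_upwards [ae_restrict_mem measurableSet_Ioo, hgnn] with t ht h1
    exact mul_nonneg (hunn t ⟨ht.1.le, ht.2.le⟩) h1
  -- Step F : conclude with W_diff
  have hW := W_diff hcm hc hbig ⟨hg, hg2, hu, hvg, hw, hv⟩ ha.1 hza hzH hug
  refine ⟨z, hz0H, hvz, ?_⟩
  rw [hvz] at hW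
  nlinarith [hW]

/-- Chasing the last zero of the flux to the left. -/
lemma goLeft {cm cM H : ℝ} (hcm : 0 < cm) (hH : 0 < H) {c : ℝ → ℝ} (hc : IsCoeff H cm cM c)
    {μ lam : ℝ}
    (hbig : ∀ᵐ y ∂volume.restrict (Set.Icc (0:ℝ) H), 1 < c y * (lam - c y * μ ^ 2))
    {u v g : ℝ → ℝ} (hsol : IsReducedSolutionOn 0 H c μ lam u v g)
    (hu0 : u 0 = 0)
    {a : ℝ} (ha : a ∈ Set.Icc (0:ℝ) H) (h0a : 0 < a) (hva : 0 < v a) (hua : u a ≤ 0) :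
    ∃ z ∈ Set.Icc (0:ℝ) H, v z = 0 ∧ u z ^ 2 ≤ u a ^ 2 + v a ^ 2 := by
  obtain ⟨hg, hg2, hu, hvg, hw, hv⟩ := hsol
  have hvcont : ContinuousOn v (Set.Icc 0 H) := sol_cont hH.le hw hv
  have hcpos : ∀ y ∈ Set.Icc (0:ℝ) H, 0 < c y := fun y hy => lt_of_lt_of_le hcm (hc.2 y hy).1
  have h0H : (0:ℝ) ≤ H := hH.le
  -- Step A : there is a zero of v in [0, a]
  have hSne : ∃ t ∈ Set.Icc (0:ℝ) a, v t = 0 := by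
    by_contra hS
    push_neg at hS
    have hvpos : ∀ t ∈ Set.Icc (0:ℝ) a, 0 < v t := by
      intro t ht
      rcases lt_or_ge 0 (v t) with h | h
      · exact h
      · exfalso
        have hsub : Set.Icc t a ⊆ Set.Icc 0 H := Set.Icc_subset_Icc ht.1 ha.2
        obtain ⟨s, hs, hvs⟩ := intermediate_value_Icc ht.2 (hvcont.mono hsub) ⟨h, hva.le⟩
        exact hS s ⟨ht.1.trans hs.1, hs.2⟩ hvs
    have hgpos : ∀ᵐ t ∂volume.restrict (Set.Ioo (0:ℝ) a), 0 < g t := by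
      have hvg' : ∀ᵐ t ∂volume.restrict (Set.Ioo (0:ℝ) a), v t = c t * g t :=
        ae_restrict_of_ae_restrict_of_subset (Set.Ioo_subset_Ioo le_rfl ha.2) hvg
      filter_upwards [ae_restrict_mem measurableSet_Ioo, hvg'] with t ht h1
      have h2 := hvpos t ⟨ht.1.le, ht.2.le⟩
      have h3 := hcpos t ⟨ht.1.le, ht.2.le.trans ha.2⟩
      nlinarith
    have hg0a : IntervalIntegrable g volume 0 a := hg.mono_set (by
      rw [Set.uIcc_of_le h0a.le, Set.uIcc_of_le h0H]
      exact Set.Icc_subset_Icc le_rfl ha.2)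
    have hua' : u a = u 0 + ∫ t in (0:ℝ)..a, g t := hu a ha
    have hIpos : 0 < ∫ t in (0:ℝ)..a, g t := by
      rw [intervalIntegral.integral_of_le h0a.le, MeasureTheory.integral_Ioc_eq_integral_Ioo]
      have hint : IntegrableOn g (Set.Ioo (0:ℝ) a) :=
        ((intervalIntegrable_iff_integrableOn_Ioc_of_le h0a.le).1 hg0a).mono_set
          Set.Ioo_subset_Ioc_self
      have hnn : 0 ≤ᵐ[volume.restrict (Set.Ioo (0:ℝ) a)] g := hgpos.mono fun t ht => ht.le
      rcases (integral_nonneg_of_ae hnn).lt_or_eq with h | h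
      · exact h
      · exfalso
        have hz := (integral_eq_zero_iff_of_nonneg_ae hnn hint).1 h.symm
        have hFalse : ∀ᵐ t ∂volume.restrict (Set.Ioo (0:ℝ) a), False := by
          filter_upwards [hgpos, hz] with t h1 h2
          exact h1.ne' h2
        have h4 : volume.restrict (Set.Ioo (0:ℝ) a) = 0 :=
          MeasureTheory.ae_eq_bot.1 (Filter.eventually_false_iff_eq_bot.1 hFalse)
        have h5 : volume (Set.Ioo (0:ℝ) a) = 0 := by
          rw [← Measure.restrict_apply_univ, h4]; simp
        rw [Real.volume_Ioo, ENNReal.ofReal_eq_zero] at h5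
        linarith
    rw [hu0] at hua'
    linarith
  -- Step B : z = last zero of v in [0, a]
  obtain ⟨t0, ht0, hvt0⟩ := hSne
  set S := Set.Icc (0:ℝ) a ∩ v ⁻¹' {0} with hSdef
  have hSne' : S.Nonempty := ⟨t0, ht0, hvt0⟩
  have hSbdd : BddAbove S := ⟨a, fun x hx => hx.1.2⟩
  have hSclosed : IsClosed S :=
    ContinuousOn.preimage_isClosed_of_isClosed
      (hvcont.mono (Set.Icc_subset_Icc le_rfl ha.2)) isClosed_Icc isClosed_singleton
  set z := sSup S with hzdef
  have hzS : z ∈ S := hSclosed.csSup_mem hSne' hSbdd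
  have hza : z ≤ a := hzS.1.2
  have hz0 : 0 ≤ z := hzS.1.1
  have hvz : v z = 0 := hzS.2
  have hz0H : z ∈ Set.Icc (0:ℝ) H := ⟨hz0, hza.trans ha.2⟩
  -- Step C : v positive on (z, a]
  have hvpos : ∀ t ∈ Set.Ioc z a, 0 < v t := by
    intro t ht
    rcases lt_or_ge 0 (v t) with h | h
    · exact h
    · exfalso
      obtain ⟨s, hs, hvs⟩ := intermediate_value_Icc ht.2
        (hvcont.mono (Set.Icc_subset_Icc (hz0.trans ht.1.le) ha.2)) ⟨h, hva.le⟩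
      have hsS : s ∈ S := ⟨⟨hz0.trans (ht.1.le.trans hs.1), hs.2⟩, hvs⟩
      have hzs := le_csSup hSbdd hsS
      have h6 := hs.1
      have h7 := ht.1
      rw [← hzdef] at hzs
      linarith
  -- Step D : g a.e. nonnegative on (z, a)
  have hgnn : ∀ᵐ t ∂volume.restrict (Set.Ioo z a), 0 ≤ g t := by
    have hvg' : ∀ᵐ t ∂volume.restrict (Set.Ioo z a), v t = c t * g t :=
      ae_restrict_of_ae_restrict_of_subset (Set.Ioo_subset_Ioo hz0 ha.2) hvg
    filter_upwards [ae_restrict_mem measurableSet_Ioo, hvg'] with t ht h1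
    have h2 := hvpos t ⟨ht.1, ht.2.le⟩
    have h3 := hcpos t ⟨hz0.trans ht.1.le, ht.2.le.trans ha.2⟩
    nlinarith
  -- Step E : u nonpositive on [z, a]
  have hgza : IntervalIntegrable g volume z a := hg.mono_set (by
    rw [Set.uIcc_of_le hza, Set.uIcc_of_le h0H]
    exact Set.Icc_subset_Icc hz0 ha.2)
  have hg0z : IntervalIntegrable g volume 0 z := hg.mono_set (by
    rw [Set.uIcc_of_le hz0, Set.uIcc_of_le h0H]
    exact Set.Icc_subset_Icc le_rfl (hza.trans ha.2))
  have hunp : ∀ t ∈ Set.Icc z a, u t ≤ 0 := by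
    intro t ht
    have hgta : IntervalIntegrable g volume t a := hgza.mono_set (by
      rw [Set.uIcc_of_le ht.2, Set.uIcc_of_le hza]
      exact Set.Icc_subset_Icc ht.1 le_rfl)
    have hg0t : IntervalIntegrable g volume 0 t := hg.mono_set (by
      rw [Set.uIcc_of_le (hz0.trans ht.1), Set.uIcc_of_le h0H]
      exact Set.Icc_subset_Icc le_rfl (ht.2.trans ha.2))
    have hat : u a = u t + ∫ s in t..a, g s := by
      rw [hu a ha, hu t ⟨hz0.trans ht.1, ht.2.trans ha.2⟩,
        ← intervalIntegral.integral_add_adjacent_intervals hg0t hgta]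
      ring
    have hInn : 0 ≤ ∫ s in t..a, g s := by
      rw [intervalIntegral.integral_of_le ht.2, MeasureTheory.integral_Ioc_eq_integral_Ioo]
      exact integral_nonneg_of_ae
        (ae_restrict_of_ae_restrict_of_subset (Set.Ioo_subset_Ioo ht.1 le_rfl) hgnn)
    linarith
  have hug : ∀ᵐ t ∂volume.restrict (Set.Ioo z a), u t * g t ≤ 0 := by
    filter_upwards [ae_restrict_mem measurableSet_Ioo, hgnn] with t ht h1
    exact mul_nonpos_iff.2 (Or.inr ⟨hunp t ⟨ht.1.le, ht.2.le⟩, h1⟩)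
  -- Step F : conclude with W_diff'
  have hW := W_diff' hcm hc hbig ⟨hg, hg2, hu, hvg, hw, hv⟩ hz0 hza ha.2 hug
  refine ⟨z, hz0H, hvz, ?_⟩
  rw [hvz] at hW
  nlinarith [hW]

/-- Chasing right, general sign. -/
lemma goRightGen {cm cM H : ℝ} (hcm : 0 < cm) (hH : 0 < H) {c : ℝ → ℝ} (hc : IsCoeff H cm cM c)
    {μ lam : ℝ}
    (hbig : ∀ᵐ y ∂volume.restrict (Set.Icc (0:ℝ) H), 1 < c y * (lam - c y * μ ^ 2))
    {u v g : ℝ → ℝ} (hsol : IsReducedSolutionOn 0 H c μ lam u v g)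
    (huH : u H = 0)
    {a : ℝ} (ha : a ∈ Set.Icc (0:ℝ) H) (haH : a < H) (hva : v a ≠ 0) (hprod : 0 ≤ u a * v a) :
    ∃ z ∈ Set.Icc (0:ℝ) H, v z = 0 ∧ u z ^ 2 ≤ u a ^ 2 + v a ^ 2 := by
  rcases hva.lt_or_gt with h | h
  · -- v a < 0 : apply goRight to the negated solution
    have hua : u a ≤ 0 := by
      by_contra h'
      push_neg at h'
      nlinarith
    have huH' : (fun y => -u y) H = 0 := by simp [huH]
    obtain ⟨z, hz, hvz, hle⟩ := goRight hcm hH hc hbig (neg_sol hsol) huH' ha haH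
      (by simpa using neg_pos.2 h) (by simpa using neg_nonneg.2 hua)
    refine ⟨z, hz, by simpa using hvz, by simpa using hle⟩
  · -- v a > 0
    have hua : 0 ≤ u a := by
      by_contra h'
      push_neg at h'
      nlinarith
    exact goRight hcm hH hc hbig hsol huH ha haH h hua

/-- Chasing left, general sign. -/
lemma goLeftGen {cm cM H : ℝ} (hcm : 0 < cm) (hH : 0 < H) {c : ℝ → ℝ} (hc : IsCoeff H cm cM c)
    {μ lam : ℝ}
    (hbig : ∀ᵐ y ∂volume.restrict (Set.Icc (0:ℝ) H), 1 < c y * (lam - c y * μ ^ 2))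
    {u v g : ℝ → ℝ} (hsol : IsReducedSolutionOn 0 H c μ lam u v g)
    (hu0 : u 0 = 0)
    {a : ℝ} (ha : a ∈ Set.Icc (0:ℝ) H) (h0a : 0 < a) (hva : v a ≠ 0) (hprod : u a * v a ≤ 0) :
    ∃ z ∈ Set.Icc (0:ℝ) H, v z = 0 ∧ u z ^ 2 ≤ u a ^ 2 + v a ^ 2 := by
  rcases hva.lt_or_gt with h | h
  · -- v a < 0 : apply goLeft to the negated solution
    have hua : 0 ≤ u a := by
      by_contra h'
      push_neg at h'
      nlinarith
    have hu0' : (fun y => -u y) 0 = 0 := by simp [hu0]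
    obtain ⟨z, hz, hvz, hle⟩ := goLeft hcm hH hc hbig (neg_sol hsol) hu0' ha h0a
      (by simpa using h) (by simpa using hua)
    refine ⟨z, hz, by simpa using hvz, by simpa using hle⟩
  · -- v a > 0
    have hua : u a ≤ 0 := by
      by_contra h'
      push_neg at h'
      nlinarith
    exact goLeft hcm hH hc hbig hsol hu0 ha h0a h hua

/-- for high-frequency nontrivial Dirichlet solutions, the set `Z'` of
zeros of the flux is nonempty and compact, and the minimal amplitude is attained there:
`inf_{[0,H]} (u² + v²) = min_{Z'} u²`. -/
theorem stmt10 (cm cM H : ℝ) (hcm : 0 < cm) (hcmM : cm < cM) (hH : 0 < H)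
    (c : ℝ → ℝ) (hc : IsCoeff H cm cM c)
    (μ lam : ℝ) (hμ : 0 < μ)
    (hbig : ∀ᵐ y ∂volume.restrict (Set.Icc (0:ℝ) H), 1 < c y * (lam - c y * μ ^ 2))
    (u v g : ℝ → ℝ) (hsol : IsReducedSolutionOn 0 H c μ lam u v g)
    (hu0 : u 0 = 0) (huH : u H = 0) (hnt : ∃ y ∈ Set.Icc (0 : ℝ) H, u y ≠ 0) :
    ({y ∈ Set.Icc (0:ℝ) H | v y = 0}).Nonempty ∧
    IsCompact {y ∈ Set.Icc (0:ℝ) H | v y = 0} ∧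
    ∃ y₀ ∈ {y ∈ Set.Icc (0:ℝ) H | v y = 0},
      (∀ z ∈ {y ∈ Set.Icc (0:ℝ) H | v y = 0}, u y₀ ^ 2 ≤ u z ^ 2) ∧
      u y₀ ^ 2 = sInf ((fun y => u y ^ 2 + v y ^ 2) '' Set.Icc (0:ℝ) H) := by
  obtain ⟨hg, hg2, hu, hvg, hw, hv⟩ := hsol
  have hsol' : IsReducedSolutionOn 0 H c μ lam u v g := ⟨hg, hg2, hu, hvg, hw, hv⟩
  have hucont : ContinuousOn u (Set.Icc 0 H) := sol_cont hH.le hg hu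
  have hvcont : ContinuousOn v (Set.Icc 0 H) := sol_cont hH.le hw hv
  set W : ℝ → ℝ := fun y => u y ^ 2 + v y ^ 2 with hWdef
  have hWcont : ContinuousOn W (Set.Icc 0 H) := (hucont.pow 2).add (hvcont.pow 2)
  have hne : (Set.Icc (0:ℝ) H).Nonempty := ⟨0, le_rfl, hH.le⟩
  obtain ⟨x, hx, hmin⟩ := isCompact_Icc.exists_isMinOn hne hWcont
  have hminx : ∀ y ∈ Set.Icc (0:ℝ) H, W x ≤ W y := fun y hy => isMinOn_iff.1 hmin y hy
  -- key step: a zero of v with small u²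
  have hkey : ∃ z ∈ Set.Icc (0:ℝ) H, v z = 0 ∧ u z ^ 2 ≤ W x := by
    by_cases hvx : v x = 0
    · exact ⟨x, hx, hvx, by simp [hWdef, hvx]⟩
    · by_cases hdir : 0 ≤ u x * v x ∧ x < H
      · exact goRightGen hcm hH hc hbig hsol' huH hx hdir.2 hvx hdir.1
      · have h2 : u x * v x ≤ 0 ∧ 0 < x := by
          rcases le_or_gt (u x * v x) 0 with h | h
          · refine ⟨h, ?_⟩
            rcases hx.1.eq_or_lt with h0 | h0
            · exact absurd (by rw [← h0]; simp [hu0, hH]) hdir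
            · exact h0
          · exfalso
            have hxH : x = H := by
              by_contra hxh
              exact hdir ⟨h.le, lt_of_le_of_ne hx.2 hxh⟩
            rw [hxH, huH] at h
            simp at h
        exact goLeftGen hcm hH hc hbig hsol' hu0 hx h2.2 hvx h2.1
  obtain ⟨z, hzI, hvz, hzle⟩ := hkey
  -- the zero set
  have hZeq : {y ∈ Set.Icc (0:ℝ) H | v y = 0} = Set.Icc (0:ℝ) H ∩ v ⁻¹' {0} := by
    ext t; simp [Set.mem_sep_iff]
  have hZclosed : IsClosed {y ∈ Set.Icc (0:ℝ) H | v y = 0} := by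
    rw [hZeq]
    exact ContinuousOn.preimage_isClosed_of_isClosed hvcont isClosed_Icc isClosed_singleton
  have hZcomp : IsCompact {y ∈ Set.Icc (0:ℝ) H | v y = 0} :=
    isCompact_Icc.of_isClosed_subset hZclosed (fun y hy => hy.1)
  have hZne : ({y ∈ Set.Icc (0:ℝ) H | v y = 0}).Nonempty := ⟨z, hzI, hvz⟩
  obtain ⟨y₀, hy₀, hmin₀⟩ := hZcomp.exists_isMinOn hZne
    ((hucont.mono (fun y hy => hy.1)).pow 2)
  have hmin₀' : ∀ t ∈ {y ∈ Set.Icc (0:ℝ) H | v y = 0}, u y₀ ^ 2 ≤ u t ^ 2 :=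
    fun t ht => isMinOn_iff.1 hmin₀ t ht
  have hsinf : sInf (W '' Set.Icc (0:ℝ) H) = W x := by
    apply IsLeast.csInf_eq
    exact ⟨⟨x, hx, rfl⟩, by rintro r ⟨y, hy, rfl⟩; exact hminx y hy⟩
  refine ⟨⟨z, hzI, hvz⟩, hZcomp, y₀, hy₀, hmin₀', ?_⟩
  have h1 : u y₀ ^ 2 ≤ W x := le_trans (hmin₀' z ⟨hzI, hvz⟩) hzle
  have h2 : W x ≤ u y₀ ^ 2 := by
    have h3 := hminx y₀ hy₀.1
    have hv0 : v y₀ = 0 := hy₀.2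
    simpa [hWdef, hv0] using h3
  rw [hsinf]
  exact le_antisymm h1 h2
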